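/- For any tuples of permutations α, β ∈ (S_n)^n, the operator Schmidt rank of U_{α,β} = Σ_{i,j=0}^{n-1} e_i e_j^* ⊗ e_{α_i(j)} e_{β_j(i)}^* equals the cardinality N(α,β) = |{(α_i(j), β_j(i)) : 0 ≤ i,j ≤ n-1}|. -/

import Mathlib

open Matrix Kronecker

/-- The realignment (reshuffling) of a bipartite operator. -/
def realign {n m : ℕ} (X : Matrix (Fin n × Fin m) (Fin n × Fin m) ℂ) :
    Matrix (Fin n × Fin n) (Fin m × Fin m) ℂ :=
  Matrix.of fun p q => X (p.1, q.1) (p.2, q.2)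

/-- The operator Schmidt rank of a bipartite operator, i.e. the rank
of its realignment. -/
noncomputable def osr {n m : ℕ} (X : Matrix (Fin n × Fin m) (Fin n × Fin m) ℂ) : ℕ :=
  (realign X).rank

/-- The bipartite unitary associated to two tuples of permutations:
`U_{α,β} = Σ_{i,j} e_i e_j^* ⊗ e_{α_i(j)} e_{β_j(i)}^*`. -/
def permU {n : ℕ} (α β : Fin n → Equiv.Perm (Fin n)) :
    Matrix (Fin n × Fin n) (Fin n × Fin n) ℂ :=
  Matrix.of fun p q => if p.2 = α p.1 q.1 ∧ q.2 = β q.1 p.1 then 1 else 0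

/-- `N(α,β) = |{(α_i(j), β_j(i)) : 0 ≤ i,j ≤ n-1}|`. -/
def Npairs {n : ℕ} (α β : Fin n → Equiv.Perm (Fin n)) : ℕ :=
  (Finset.image (fun ij : Fin n × Fin n => ((α ij.1) ij.2, (β ij.2) ij.1))
    Finset.univ).card

/-- The operator Schmidt rank of `U_{α,β}` equals `N(α,β)`. -/
theorem stmt5 {n : ℕ} (α β : Fin n → Equiv.Perm (Fin n)) :
    osr (permU α β) = Npairs α β := by
  classical
  set f : Fin n × Fin n → Fin n × Fin n := fun p => ((α p.1) p.2, (β p.2) p.1) with hf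
  set M : Matrix (Fin n × Fin n) (Fin n × Fin n) ℂ := realign (permU α β) with hM
  -- each row of M is the standard basis vector at `f p`
  have hrow : ∀ p, M p = Pi.single (f p) (1 : ℂ) := by
    intro p
    funext q
    show (if q.1 = (α p.1) p.2 ∧ q.2 = (β p.2) p.1 then (1:ℂ) else 0) = _
    rw [Pi.single_apply]
    congr 1
    simp [hf, Prod.ext_iff]
  set S : Finset (Fin n × Fin n) := Finset.image f Finset.univ with hS
  have hScoe : (S : Set (Fin n × Fin n)) = Set.range f := by
    simp [hS]
  -- rank of M = finrank of span of rows
  have h1 : M.rank = Module.finrank ℂ (Submodule.span ℂ (Set.range M)) := by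
    rw [← Matrix.rank_transpose, Matrix.rank_eq_finrank_span_cols]; rfl
  have hrange : Set.range M = Set.range (fun c : S => (Pi.single (c : Fin n × Fin n) 1 : (Fin n × Fin n) → ℂ)) := by
    have h2 : Set.range M = (fun c => Pi.single c (1:ℂ)) '' Set.range f := by
      rw [← Set.range_comp]
      ext x
      constructor
      · rintro ⟨p, rfl⟩; exact ⟨p, (hrow p).symm⟩
      · rintro ⟨p, rfl⟩; exact ⟨p, hrow p⟩
    rw [h2, ← hScoe, Set.image_eq_range]
    rfl
  have hli : LinearIndependent ℂ (fun c : S => (Pi.single (c : Fin n × Fin n) 1 : (Fin n × Fin n) → ℂ)) := by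
    have hb : LinearIndependent ℂ (fun c : Fin n × Fin n => Pi.single c (1 : ℂ)) := by
      have h := (Pi.basisFun ℂ (Fin n × Fin n)).linearIndependent
      have he : ⇑(Pi.basisFun ℂ (Fin n × Fin n)) = fun c => Pi.single c (1 : ℂ) :=
        funext fun i => Pi.basisFun_apply ℂ (Fin n × Fin n) i
      rwa [he] at h
    exact hb.comp _ Subtype.val_injective
  have h3 : Module.finrank ℂ (Submodule.span ℂ (Set.range M)) = S.card := by
    rw [hrange, finrank_span_eq_card hli, Fintype.card_coe]
  show M.rank = Npairs α β
  rw [h1, h3]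
  rfl
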